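/- Given commuting derivations ∂_1, ∂_2, ... on an algebra, the family D_k := (-1)^k p_k(-∂̃), where p_k is the k-th elementary Schur polynomial and ∂̃ = (∂_1, ∂_2/2, ∂_3/3, ...), forms a Hasse-Schmidt derivation: D_k(ab) = \sum_{j=0}^k D_j(a) D_{k-j}(b) for all k ≥ 0 (with D_0 = id). -/

import Mathlib

/-- The `n`-th elementary Schur polynomial evaluated at `x_1, x_2, …`:
the coefficient of `λ^n` in `∏_{k=1}^{n} exp(x_k λ^k)`, matching the generating
function `∑_{n≥0} p_n(x) λ^n = exp(∑_{k≥1} x_k λ^k)` (when the `x_k` commute). -/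
noncomputable def elemSchur {A : Type*} [Ring A] [Algebra ℚ A] (x : ℕ → A) (n : ℕ) : A :=
  (((List.range n).map (fun k => ∑ j ∈ Finset.range (n + 1),
      Polynomial.C ((j.factorial : ℚ)⁻¹ • x (k + 1) ^ j)
        * Polynomial.X ^ ((k + 1) * j))).prod).coeff n

open Polynomial in
/-- The truncated exponential `∑_{j ≤ N} (u^j/j!) X^(m j)`. -/
noncomputable def Tpoly {A : Type*} [Ring A] [Algebra ℚ A]
    (m N : ℕ) (u : Module.End ℚ A) : Polynomial (Module.End ℚ A) :=
  ∑ j ∈ Finset.range (N + 1), C ((j.factorial : ℚ)⁻¹ • u ^ j) * X ^ (m * j)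

section aux
variable {A : Type*} [Ring A] [Algebra ℚ A]

lemma elemSchur_eq_Tpoly (x : ℕ → Module.End ℚ A) (n : ℕ) :
    elemSchur x n
      = (((List.range n).map (fun k => Tpoly (k + 1) n (x (k + 1)))).prod).coeff n := rfl

lemma pow_leibniz (u : Module.End ℚ A)
    (hu : ∀ a b : A, u (a * b) = u a * b + a * u b) :
    ∀ (j : ℕ) (a b : A), (u ^ j) (a * b)
      = ∑ i ∈ Finset.range (j + 1), j.choose i • ((u ^ i) a * (u ^ (j - i)) b) := by
  intro j
  induction j with
  | zero => intro a b; simp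
  | succ j ih =>
    intro a b
    have h1 : (u ^ (j+1)) (a*b) = u ((u ^ j) (a*b)) := by
      rw [pow_succ']; rfl
    rw [h1, ih, map_sum]
    have h2 : ∀ i ∈ Finset.range (j+1),
        u (j.choose i • ((u ^ i) a * (u ^ (j - i)) b))
        = j.choose i • ((u ^ (i+1)) a * (u ^ (j - i)) b)
          + j.choose i • ((u ^ i) a * (u ^ (j + 1 - i)) b) := by
      intro i hi
      simp only [Finset.mem_range] at hi
      have : j + 1 - i = (j - i) + 1 := by omega
      rw [map_nsmul, hu, this, smul_add]
      congr 2
      · rw [pow_succ']; rfl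
      · rw [pow_succ']; rfl
    rw [Finset.sum_congr rfl h2, Finset.sum_add_distrib]
    set t : ℕ → A := fun i => (u ^ i) a * (u ^ (j + 1 - i)) b with ht
    have hA : ∑ i ∈ Finset.range (j+1), j.choose i • ((u ^ (i+1)) a * (u ^ (j - i)) b)
        = ∑ i ∈ Finset.range (j+1), j.choose i • t (i+1) := by
      apply Finset.sum_congr rfl
      intro i hi
      simp only [Finset.mem_range] at hi
      have : j + 1 - (i + 1) = j - i := by omega
      simp [ht, this]
    have hB : ∑ i ∈ Finset.range (j+1), j.choose i • ((u ^ i) a * (u ^ (j + 1 - i)) b)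
        = t 0 + ∑ i ∈ Finset.range j, j.choose (i+1) • t (i+1) := by
      rw [Finset.sum_range_succ']
      simp [ht]
      ring_nf
      rw [add_comm]
    have hRHS : ∑ i ∈ Finset.range (j+2), (j+1).choose i • t i
        = t 0 + (∑ i ∈ Finset.range (j+1), j.choose i • t (i+1)
            + ∑ i ∈ Finset.range j, j.choose (i+1) • t (i+1)) := by
      rw [Finset.sum_range_succ' (fun i => (j+1).choose i • t i)]
      simp only [Nat.choose_succ_succ, add_smul, Nat.choose_zero_right, one_smul]
      rw [Finset.sum_add_distrib]
      have : ∑ i ∈ Finset.range (j+1), j.choose (i+1) • t (i+1)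
          = ∑ i ∈ Finset.range j, j.choose (i+1) • t (i+1) := by
        rw [Finset.sum_range_succ, Nat.choose_succ_self]
        simp
      rw [this]
      abel
    rw [hA, hB, hRHS]
    abel

lemma divpow_leibniz (u : Module.End ℚ A)
    (hu : ∀ a b : A, u (a * b) = u a * b + a * u b) (j : ℕ) (a b : A) :
    ((j.factorial : ℚ)⁻¹ • u ^ j) (a * b)
      = ∑ i ∈ Finset.range (j + 1),
          ((i.factorial : ℚ)⁻¹ • u ^ i) a * (((j - i).factorial : ℚ)⁻¹ • u ^ (j - i)) b := by
  rw [LinearMap.smul_apply, pow_leibniz u hu, Finset.smul_sum]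
  apply Finset.sum_congr rfl
  intro i hi
  simp only [Finset.mem_range] at hi
  have hi' : i ≤ j := by omega
  rw [← Nat.cast_smul_eq_nsmul ℚ]
  simp only [LinearMap.smul_apply, smul_mul_assoc, mul_smul_comm, smul_smul]
  congr 1
  have hfac : (j.choose i : ℚ) * i.factorial * (j - i).factorial = j.factorial := by
    exact_mod_cast congrArg (Nat.cast : ℕ → ℚ) (Nat.choose_mul_factorial_mul_factorial hi')
  have h1 : (i.factorial : ℚ) ≠ 0 := by exact_mod_cast i.factorial_ne_zero
  have h2 : ((j - i).factorial : ℚ) ≠ 0 := by exact_mod_cast (j - i).factorial_ne_zero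
  have h3 : (j.factorial : ℚ) ≠ 0 := by exact_mod_cast j.factorial_ne_zero
  field_simp
  linarith [hfac]

lemma coeff_Tpoly (m N : ℕ) (u : Module.End ℚ A) (hm : 0 < m) (i : ℕ) (hiN : i ≤ N) :
    (Tpoly m N u).coeff i
      = if m ∣ i then ((i / m).factorial : ℚ)⁻¹ • u ^ (i / m) else 0 := by
  rw [Tpoly, Polynomial.finset_sum_coeff]
  simp only [Polynomial.coeff_C_mul, Polynomial.coeff_X_pow, mul_ite, mul_one, mul_zero]
  by_cases h : m ∣ i
  · obtain ⟨J, rfl⟩ := h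
    rw [Finset.sum_eq_single J]
    · have : m * J / m = J := Nat.mul_div_cancel_left J hm
      simp [this]
    · intro j hj hne
      have : ¬ (m * J = m * j) := fun hh => hne (Nat.eq_of_mul_eq_mul_left hm hh.symm)
      simp [this]
    · intro h
      exfalso
      apply h
      simp only [Finset.mem_range]
      have : J ≤ m * J := Nat.le_mul_of_pos_left J hm
      omega
  · rw [if_neg h]
    apply Finset.sum_eq_zero
    intro j hj
    have : ¬ (i = m * j) := fun hh => h ⟨j, hh⟩
    simp [this]

/-- Hasse-Schmidt property of the coefficients of an operator-valued polynomial,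
up to degree `N`. -/
def HSle (P : Polynomial (Module.End ℚ A)) (N : ℕ) : Prop :=
  ∀ k ≤ N, ∀ a b : A,
    P.coeff k (a * b) = ∑ j ∈ Finset.range (k + 1), P.coeff j a * P.coeff (k - j) b

lemma HSle_one (N : ℕ) : HSle (1 : Polynomial (Module.End ℚ A)) N := by
  intro k hk a b
  rcases Nat.eq_zero_or_pos k with rfl | hpos
  · simp [Polynomial.coeff_one]
  · rw [Polynomial.coeff_one, if_neg (by omega)]
    rw [Finset.sum_eq_zero]
    · simp
    intro j hj
    rcases Nat.eq_zero_or_pos j with rfl | hj0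
    · rw [Polynomial.coeff_one (n := k - 0), if_neg (by omega)]
      simp
    · rw [Polynomial.coeff_one (n := j), if_neg (by omega)]
      simp

lemma sum_filter_dvd {M : Type*} [AddCommMonoid M] (m J : ℕ) (hm : 0 < m)
    (F : ℕ → M) :
    ∑ j ∈ (Finset.range (m * J + 1)).filter (fun j => m ∣ j), F j
      = ∑ i ∈ Finset.range (J + 1), F (m * i) := by
  apply Finset.sum_nbij' (fun j => j / m) (fun i => m * i)
  · intro j hj
    simp only [Finset.mem_filter, Finset.mem_range] at hj
    obtain ⟨hj1, ⟨c, rfl⟩⟩ := hj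
    simp only [Finset.mem_range]
    rw [Nat.mul_div_cancel_left c hm]
    have : c ≤ J := Nat.le_of_mul_le_mul_left (by omega) hm
    omega
  · intro i hi
    simp only [Finset.mem_range] at hi
    simp only [Finset.mem_filter, Finset.mem_range]
    constructor
    · have : m * i ≤ m * J := Nat.mul_le_mul_left m (by omega)
      omega
    · exact ⟨i, rfl⟩
  · intro j hj
    simp only [Finset.mem_filter] at hj
    exact (Nat.mul_div_cancel' hj.2)
  · intro i hi
    exact Nat.mul_div_cancel_left i hm
  · intro j hj
    simp only [Finset.mem_filter] at hj
    rw [Nat.mul_div_cancel' hj.2]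

lemma Tpoly_HS (m N : ℕ) (u : Module.End ℚ A) (hm : 0 < m)
    (hu : ∀ a b : A, u (a * b) = u a * b + a * u b) :
    HSle (Tpoly m N u) N := by
  intro k hk a b
  by_cases h : m ∣ k
  · obtain ⟨J, rfl⟩ := h
    have hJm : m * J / m = J := Nat.mul_div_cancel_left J hm
    have hstep : ∀ j ∈ Finset.range (m * J + 1),
        (Tpoly m N u).coeff j a * (Tpoly m N u).coeff (m * J - j) b
        = if m ∣ j then (Tpoly m N u).coeff j a * (Tpoly m N u).coeff (m * J - j) b
          else 0 := by
      intro j hj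
      by_cases hdj : m ∣ j
      · rw [if_pos hdj]
      · rw [if_neg hdj, coeff_Tpoly m N u hm j (by simp at hj; omega), if_neg hdj]
        simp
    rw [Finset.sum_congr rfl hstep, ← Finset.sum_filter, sum_filter_dvd m J hm]
    rw [coeff_Tpoly m N u hm (m * J) hk, if_pos ⟨J, rfl⟩, hJm,
      divpow_leibniz u hu J a b]
    apply Finset.sum_congr rfl
    intro i hi
    simp only [Finset.mem_range] at hi
    have hiJ : i ≤ J := by omega
    have h1 : m * i ≤ N := le_trans (Nat.mul_le_mul_left m hiJ) hk
    have h2 : m * J - m * i = m * (J - i) := by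
      rw [Nat.mul_sub]
    rw [coeff_Tpoly m N u hm (m * i) h1, if_pos ⟨i, rfl⟩,
      Nat.mul_div_cancel_left i hm, h2,
      coeff_Tpoly m N u hm (m * (J - i)) (by omega), if_pos ⟨J - i, rfl⟩,
      Nat.mul_div_cancel_left (J - i) hm]
  · rw [coeff_Tpoly m N u hm k hk, if_neg h]
    rw [Finset.sum_eq_zero]
    · simp
    intro j hj
    simp only [Finset.mem_range] at hj
    by_cases hdj : m ∣ j
    · have : ¬ m ∣ (k - j) := by
        intro hd
        apply h
        have := Nat.dvd_add hdj hd
        rwa [Nat.add_sub_cancel' (by omega)] at this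
      rw [coeff_Tpoly m N u hm (k - j) (by omega), if_neg this]
      simp
    · rw [coeff_Tpoly m N u hm j (by omega), if_neg hdj]
      simp

lemma HSle_mul {P Q : Polynomial (Module.End ℚ A)} {N : ℕ}
    (hP : HSle P N) (hQ : HSle Q N) : HSle (P * Q) N := by
  intro k hk a b
  have hcoeff : ∀ n : ℕ, (P * Q).coeff n
      = ∑ i ∈ Finset.range (n + 1), P.coeff i * Q.coeff (n - i) := by
    intro n
    rw [Polynomial.coeff_mul, Finset.Nat.sum_antidiagonal_eq_sum_range_succ_mk]
  have L1 : (P * Q).coeff k (a * b)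
      = ∑ i ∈ Finset.range (k + 1), ∑ p ∈ Finset.range (k - i + 1),
          ∑ r ∈ Finset.range (i + 1),
            P.coeff r (Q.coeff p a) * P.coeff (i - r) (Q.coeff (k - i - p) b) := by
    rw [hcoeff k, LinearMap.sum_apply]
    apply Finset.sum_congr rfl
    intro i hi
    simp only [Finset.mem_range] at hi
    rw [Module.End.mul_apply, hQ (k - i) (by omega) a b, map_sum]
    apply Finset.sum_congr rfl
    intro p hp
    rw [hP i (by omega)]
  have R1 : ∑ j ∈ Finset.range (k + 1), (P * Q).coeff j a * (P * Q).coeff (k - j) b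
      = ∑ j ∈ Finset.range (k + 1), ∑ r ∈ Finset.range (j + 1),
          ∑ s ∈ Finset.range (k - j + 1),
            P.coeff r (Q.coeff (j - r) a) * P.coeff s (Q.coeff (k - j - s) b) := by
    apply Finset.sum_congr rfl
    intro j hj
    rw [hcoeff j, hcoeff (k - j), LinearMap.sum_apply, LinearMap.sum_apply,
      Finset.sum_mul_sum]
    apply Finset.sum_congr rfl
    intro r hr
    apply Finset.sum_congr rfl
    intro s hs
    rw [Module.End.mul_apply, Module.End.mul_apply]
  rw [L1, R1]
  rw [show (∑ i ∈ Finset.range (k + 1), ∑ p ∈ Finset.range (k - i + 1),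
          ∑ r ∈ Finset.range (i + 1),
            P.coeff r (Q.coeff p a) * P.coeff (i - r) (Q.coeff (k - i - p) b))
      = ∑ x ∈ (Finset.range (k + 1)).sigma
          (fun i => Finset.range (k - i + 1) ×ˢ Finset.range (i + 1)),
            P.coeff x.2.2 (Q.coeff x.2.1 a)
              * P.coeff (x.1 - x.2.2) (Q.coeff (k - x.1 - x.2.1) b) by
    rw [Finset.sum_sigma]
    exact Finset.sum_congr rfl fun i _ => (Finset.sum_product (f := fun y =>
      P.coeff y.2 (Q.coeff y.1 a) * P.coeff (i - y.2) (Q.coeff (k - i - y.1) b)) ..).symm]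
  rw [show (∑ j ∈ Finset.range (k + 1), ∑ r ∈ Finset.range (j + 1),
          ∑ s ∈ Finset.range (k - j + 1),
            P.coeff r (Q.coeff (j - r) a) * P.coeff s (Q.coeff (k - j - s) b))
      = ∑ x ∈ (Finset.range (k + 1)).sigma
          (fun j => Finset.range (j + 1) ×ˢ Finset.range (k - j + 1)),
            P.coeff x.2.1 (Q.coeff (x.1 - x.2.1) a)
              * P.coeff x.2.2 (Q.coeff (k - x.1 - x.2.2) b) by
    rw [Finset.sum_sigma]
    exact Finset.sum_congr rfl fun j _ => (Finset.sum_product (f := fun y =>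
      P.coeff y.1 (Q.coeff (j - y.1) a) * P.coeff y.2 (Q.coeff (k - j - y.2) b)) ..).symm]
  apply Finset.sum_nbij' (i := fun x => (⟨x.2.2 + x.2.1, (x.2.2, x.1 - x.2.2)⟩ :
      Σ _ : ℕ, ℕ × ℕ))
    (j := fun y => (⟨y.2.1 + y.2.2, (y.1 - y.2.1, y.2.1)⟩ : Σ _ : ℕ, ℕ × ℕ))
  · rintro ⟨i, p, r⟩ hx
    simp only [Finset.mem_sigma, Finset.mem_product, Finset.mem_range] at hx ⊢
    omega
  · rintro ⟨j, r, s⟩ hy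
    simp only [Finset.mem_sigma, Finset.mem_product, Finset.mem_range] at hy ⊢
    omega
  · rintro ⟨i, p, r⟩ hx
    simp only [Finset.mem_sigma, Finset.mem_product, Finset.mem_range] at hx
    have h1 : r + (i - r) = i := by omega
    have h2 : r + p - r = p := by omega
    simp only [h1, h2]
  · rintro ⟨j, r, s⟩ hy
    simp only [Finset.mem_sigma, Finset.mem_product, Finset.mem_range] at hy
    have h1 : r + (j - r) = j := by omega
    have h2 : r + s - r = s := by omega
    simp only [h1, h2]
  · rintro ⟨i, p, r⟩ hx
    simp only [Finset.mem_sigma, Finset.mem_product, Finset.mem_range] at hx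
    have h1 : r + p - r = p := by omega
    have h2 : k - (r + p) - (i - r) = k - i - p := by omega
    simp only [h1, h2]

lemma HSle_listProd {N : ℕ} :
    ∀ L : List (Polynomial (Module.End ℚ A)), (∀ P ∈ L, HSle P N) → HSle L.prod N := by
  intro L
  induction L with
  | nil => intro _; simpa using HSle_one N
  | cons P L ih =>
    intro h
    rw [List.prod_cons]
    exact HSle_mul (h P (by simp)) (ih fun Q hQ => h Q (by simp [hQ]))

lemma coeff_map_prod_congr (l : List ℕ) (f g : ℕ → Polynomial (Module.End ℚ A)) (i : ℕ)
    (h : ∀ a ∈ l, ∀ d ≤ i, (f a).coeff d = (g a).coeff d) :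
    ∀ d ≤ i, ((l.map f).prod).coeff d = ((l.map g).prod).coeff d := by
  induction l with
  | nil => intro d hd; rfl
  | cons a l ih =>
    intro d hd
    simp only [List.map_cons, List.prod_cons]
    rw [Polynomial.coeff_mul, Polynomial.coeff_mul]
    apply Finset.sum_congr rfl
    intro x hx
    rw [Finset.HasAntidiagonal.mem_antidiagonal] at hx
    rw [h a (by simp) x.1 (by omega),
      ih (fun a ha d hd => h a (by simp [ha]) d hd) x.2 (by omega)]

lemma coeff_mul_prod_ones (i : ℕ) :
    ∀ L : List (Polynomial (Module.End ℚ A)),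
    (∀ t ∈ L, t.coeff 0 = 1 ∧ ∀ e, e ≠ 0 → e ≤ i → t.coeff e = 0) →
    ∀ Q : Polynomial (Module.End ℚ A), ∀ d ≤ i, (Q * L.prod).coeff d = Q.coeff d := by
  intro L
  induction L with
  | nil => intro _ Q d _; simp
  | cons t L ih =>
    intro h Q d hd
    rw [List.prod_cons, ← mul_assoc,
      ih (fun t ht => h t (by simp [ht])) (Q * t) d hd]
    rw [Polynomial.coeff_mul, Finset.Nat.sum_antidiagonal_eq_sum_range_succ_mk,
      Finset.sum_eq_single d]
    · simp [(h t (by simp)).1]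
    · intro e he hne
      simp only [Finset.mem_range] at he
      rw [(h t (by simp)).2 (d - e) (by omega) (by omega)]
      simp
    · intro hh
      simp at hh

end aux

/-- Given commuting derivations `∂_1, ∂_2, …` of an algebra, the operators
`D_k := (-1)^k p_k(-∂_1, -∂_2/2, -∂_3/3, …)` form a Hasse-Schmidt derivation:
`D_0 = id` and `D_k(ab) = ∑_{j=0}^k D_j(a) D_{k-j}(b)`. -/
theorem schur_of_derivations_is_HasseSchmidt
    {A : Type*} [Ring A] [Algebra ℚ A]
    (del : ℕ → Module.End ℚ A)
    (hder : ∀ (m : ℕ) (a b : A), del m (a * b) = del m a * b + a * del m b)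
    (hcomm : ∀ m l : ℕ, del m * del l = del l * del m)
    (D : ℕ → Module.End ℚ A)
    (hD : ∀ k, D k = ((-1 : ℚ) ^ k) •
      elemSchur (fun m => -((m : ℚ)⁻¹ • del m)) k) :
    D 0 = 1 ∧
    ∀ (k : ℕ) (a b : A), D k (a * b) = ∑ j ∈ Finset.range (k + 1), D j a * D (k - j) b := by
  set x : ℕ → Module.End ℚ A := fun m => -((m : ℚ)⁻¹ • del m) with hxdef
  have hx : ∀ (m : ℕ) (a b : A), x m (a * b) = x m a * b + a * x m b := by
    intro m a b
    simp only [hxdef, LinearMap.neg_apply, LinearMap.smul_apply, hder, smul_add,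
      neg_add, neg_mul, mul_neg, smul_mul_assoc, mul_smul_comm]
  -- the product polynomial for truncation level n
  set Pn : ℕ → Polynomial (Module.End ℚ A) :=
    fun n => ((List.range n).map (fun k' => Tpoly (k' + 1) n (x (k' + 1)))).prod with hPn
  have hES : ∀ n, elemSchur x n = (Pn n).coeff n := fun n => elemSchur_eq_Tpoly x n
  have hHS : ∀ n, HSle (Pn n) n := by
    intro n
    apply HSle_listProd
    intro P hP
    simp only [List.mem_map, List.mem_range] at hP
    obtain ⟨k', hk', rfl⟩ := hP
    exact Tpoly_HS (k' + 1) n (x (k' + 1)) (by omega) (hx (k' + 1))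
  -- stability of coefficients
  have hstab : ∀ j k : ℕ, j ≤ k → (Pn k).coeff j = (Pn j).coeff j := by
    intro j k hjk
    have step1 : (Pn k).coeff j
        = (((List.range k).map (fun k' => Tpoly (k' + 1) j (x (k' + 1)))).prod).coeff j := by
      apply coeff_map_prod_congr (List.range k)
        (fun k' => Tpoly (k' + 1) k (x (k' + 1)))
        (fun k' => Tpoly (k' + 1) j (x (k' + 1))) j
      · intro a _ d hd
        rw [coeff_Tpoly (a + 1) k (x (a + 1)) (by omega) d (by omega),
          coeff_Tpoly (a + 1) j (x (a + 1)) (by omega) d (by omega)]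
      · rfl
    rw [step1]
    have hsplit : List.range k = List.range j ++ (List.range (k - j)).map (j + ·) := by
      conv_lhs => rw [show k = j + (k - j) by omega]
      exact List.range_add
    rw [hsplit, List.map_append, List.prod_append]
    apply coeff_mul_prod_ones j
    · intro t ht
      simp only [List.map_map, List.mem_map, List.mem_range, Function.comp] at ht
      obtain ⟨c, hc, rfl⟩ := ht
      constructor
      · rw [coeff_Tpoly (j + c + 1) j (x (j + c + 1)) (by omega) 0 (by omega),
          if_pos (dvd_zero _)]
        simp
      · intro e he hej
        rw [coeff_Tpoly (j + c + 1) j (x (j + c + 1)) (by omega) e hej, if_neg]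
        intro hdvd
        have := Nat.le_of_dvd (by omega) hdvd
        omega
    · exact le_refl j
  constructor
  · rw [hD 0, hES 0, pow_zero, one_smul]
    simp [hPn, Polynomial.coeff_one]
  · intro k a b
    rw [hD k, hES k, LinearMap.smul_apply, hHS k k (le_refl k) a b, Finset.smul_sum]
    apply Finset.sum_congr rfl
    intro j hj
    simp only [Finset.mem_range] at hj
    rw [hD j, hD (k - j), hES j, hES (k - j),
      ← hstab j k (by omega), ← hstab (k - j) k (by omega)]
    simp only [LinearMap.smul_apply, smul_mul_assoc, mul_smul_comm, smul_smul]
    congr 1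
    rw [← pow_add]
    congr 1
    omega
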